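/- Let (s_t)_{t>0} be kernels satisfying the size and y-Hölder conditions with exponents m, α > 0. Let σ be a finite Borel measure on ℝ^n, let P, R be cubes with ℓ(P) ≤ ℓ(R)/2, and let g ∈ L²(σ) with supp g ⊂ P and ∫ g dσ = 0. Then for every x ∈ R and every t ∈ [ℓ(R)/2, ℓ(R)): |θ_t^σ g(x)| ≤ C ℓ(P)^{α/2} ℓ(R)^{α/2} D(P,R)^{−(m+α)} σ(P)^{1/2} ‖g‖_{L²(σ)}, where D(P,R) = ℓ(P) + ℓ(R) + d(P,R) and C depends only on n, m, α and the kernel constants. -/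

import Mathlib

open MeasureTheory Metric Set
open scoped ENNReal NNReal

noncomputable section

abbrev Rn (n : ℕ) : Type := EuclideanSpace ℝ (Fin n)

structure Cube (n : ℕ) : Type where
  c : Rn n
  l : ℝ
  l_pos : 0 < l

namespace Cube

variable {n : ℕ}

/-- The (half-open) cube as a subset of `ℝⁿ`. -/
def set (Q : Cube n) : Set (Rn n) :=
  {x | ∀ i, Q.c i - Q.l / 2 ≤ x i ∧ x i < Q.c i + Q.l / 2}

/-- The concentric dilated cube `λQ` as a set. -/
def dilatedSet (Q : Cube n) (lam : ℝ) : Set (Rn n) :=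
  {x | ∀ i, Q.c i - lam * Q.l / 2 ≤ x i ∧ x i < Q.c i + lam * Q.l / 2}

/-- The distance `d(P,R)` between two cubes. -/
def dist (P R : Cube n) : ℝ :=
  sInf (Set.image2 (fun x y => Dist.dist x y) P.set R.set)

/-- The long distance `D(P,R) = ℓ(P) + ℓ(R) + d(P,R)`. -/
def longDist (P R : Cube n) : ℝ := P.l + R.l + Cube.dist P R

end Cube

/-- Size condition for the kernels `s_t`. -/
def SizeCond (n : ℕ) (m α Cs : ℝ) (s : ℝ → Rn n → Rn n → ℂ) : Prop :=
  ∀ t : ℝ, 0 < t → ∀ x y : Rn n,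
    ‖s t x y‖ ≤ Cs * t ^ α / (t + Dist.dist x y) ^ (m + α)

/-- Hölder condition in the `y`-variable. -/
def HolderY (n : ℕ) (m α Cs : ℝ) (s : ℝ → Rn n → Rn n → ℂ) : Prop :=
  ∀ t : ℝ, 0 < t → ∀ x y z : Rn n, Dist.dist y z < t / 2 →
    ‖s t x y - s t x z‖ ≤ Cs * Dist.dist y z ^ α / (t + Dist.dist x y) ^ (m + α)

/-- Hölder condition in the `x`-variable. -/
def HolderX (n : ℕ) (m α Cs : ℝ) (s : ℝ → Rn n → Rn n → ℂ) : Prop :=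
  ∀ t : ℝ, 0 < t → ∀ x y z : Rn n, Dist.dist x z < t / 2 →
    ‖s t x y - s t z y‖ ≤ Cs * Dist.dist x z ^ α / (t + Dist.dist x y) ^ (m + α)

/-- `θ_t(g dσ)(x) = ∫ s_t(x,y) g(y) dσ(y)`. -/
def theta {n : ℕ} (s : ℝ → Rn n → Rn n → ℂ) (σ : Measure (Rn n)) (g : Rn n → ℂ)
    (t : ℝ) (x : Rn n) : ℂ :=
  ∫ y, s t x y * g y ∂σ

/-- `∫_I |θ_t(g dσ)(x)|² dt/t`, the square of the vertical square function with
`t` restricted to `I` (the full square function corresponds to `I = (0,∞)`, the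
truncation `V_Q` to `I = (0, ℓ(Q))`). -/
def sqV {n : ℕ} (s : ℝ → Rn n → Rn n → ℂ) (σ : Measure (Rn n)) (g : Rn n → ℂ)
    (I : Set ℝ) (x : Rn n) : ℝ≥0∞ :=
  ∫⁻ t in I, (‖theta s σ g t x‖₊ : ℝ≥0∞) ^ 2 / ENNReal.ofReal t


section Aux

variable {n : ℕ}

lemma center_mem (Q : Cube n) : Q.c ∈ Q.set := by
  intro i
  constructor <;> [linarith [Q.l_pos]; linarith [Q.l_pos]]

lemma cube_dist_nonneg (P R : Cube n) : 0 ≤ Cube.dist P R := by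
  apply le_csInf
  · exact ⟨_, Set.mem_image2_of_mem (center_mem P) (center_mem R)⟩
  · rintro d ⟨a, _, b, _, rfl⟩; exact dist_nonneg

lemma cube_dist_le {P R : Cube n} {x y : Rn n} (hy : y ∈ P.set) (hx : x ∈ R.set) :
    Cube.dist P R ≤ Dist.dist x y := by
  rw [dist_comm]
  exact csInf_le ⟨0, by rintro d ⟨a, _, b, _, rfl⟩; exact dist_nonneg⟩
    (Set.mem_image2_of_mem hy hx)

lemma dist_center_le {P : Cube n} {y : Rn n} (hy : y ∈ P.set) :
    Dist.dist y P.c ≤ Real.sqrt n * P.l / 2 := by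
  rw [EuclideanSpace.dist_eq]
  have h1 : ∑ i, Dist.dist (y i) (P.c i) ^ 2 ≤ (n : ℝ) * (P.l / 2) ^ 2 := by
    calc ∑ i, Dist.dist (y i) (P.c i) ^ 2 ≤ ∑ _i : Fin n, (P.l / 2) ^ 2 := by
          apply Finset.sum_le_sum
          intro i _
          have h := hy i
          have habs : |y i - P.c i| ≤ P.l / 2 := abs_le.2 ⟨by linarith [h.1], by linarith [h.2]⟩
          calc Dist.dist (y i) (P.c i) ^ 2 = |y i - P.c i| ^ 2 := by rw [Real.dist_eq]
            _ ≤ (P.l / 2) ^ 2 := by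
                apply sq_le_sq' (by linarith [abs_nonneg (y i - P.c i)]) habs
      _ = (n : ℝ) * (P.l / 2) ^ 2 := by simp [Finset.sum_const]
  calc Real.sqrt (∑ i, Dist.dist (y i) (P.c i) ^ 2)
      ≤ Real.sqrt ((n : ℝ) * (P.l / 2) ^ 2) := Real.sqrt_le_sqrt h1
    _ = Real.sqrt n * (P.l / 2) := by
        rw [Real.sqrt_mul (Nat.cast_nonneg n), Real.sqrt_sq (by linarith [P.l_pos])]
    _ = Real.sqrt n * P.l / 2 := by ring

lemma cube_measurableSet (Q : Cube n) : MeasurableSet Q.set := by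
  have h : Q.set = ⋂ i, (fun x : Rn n => x i) ⁻¹' Set.Ico (Q.c i - Q.l / 2) (Q.c i + Q.l / 2) := by
    ext x; simp [Cube.set, Set.mem_Ico]
  rw [h]
  exact MeasurableSet.iInter fun i => ((measurable_pi_apply i).comp (WithLp.measurable_ofLp 2 (Fin n → ℝ))) measurableSet_Ico

lemma rpow_le_geom {a b c e : ℝ} (ha : 0 ≤ a) (he : 0 < e) (hb : a ≤ b) (hc : a ≤ c) :
    a ^ e ≤ b ^ (e / 2) * c ^ (e / 2) := by
  rcases eq_or_lt_of_le ha with h0 | h0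
  · rw [← h0, Real.zero_rpow he.ne']
    exact mul_nonneg (Real.rpow_nonneg (by linarith) _) (Real.rpow_nonneg (by linarith) _)
  · have hsplit : a ^ e = a ^ (e / 2) * a ^ (e / 2) := by
      rw [← Real.rpow_add h0]
      congr 1
      ring
    rw [hsplit]
    exact mul_le_mul (Real.rpow_le_rpow ha hb (by linarith))
      (Real.rpow_le_rpow ha hc (by linarith))
      (Real.rpow_nonneg ha _) (Real.rpow_nonneg (by linarith) _)

lemma frac_bound {Cs N N' s Dv E : ℝ} (hCs : 0 ≤ Cs) (hNN : N ≤ N') (hN : 0 ≤ N)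
    (hD : 0 < Dv) (hE : 0 ≤ E) (hs : Dv / 3 ≤ s) :
    Cs * N / s ^ E ≤ Cs * N' * 3 ^ E / Dv ^ E := by
  have h1 : Dv ^ E / 3 ^ E ≤ s ^ E := by
    rw [← Real.div_rpow hD.le (by norm_num : (0:ℝ) ≤ 3)]
    exact Real.rpow_le_rpow (by positivity) hs hE
  have h2 : (0:ℝ) < Dv ^ E / 3 ^ E := by positivity
  calc Cs * N / s ^ E ≤ Cs * N' / (Dv ^ E / 3 ^ E) :=
        div_le_div₀ (mul_nonneg hCs (hN.trans hNN)) (mul_le_mul_of_nonneg_left hNN hCs) h2 h1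
    _ = Cs * N' * 3 ^ E / Dv ^ E := by field_simp

lemma cs_bound (σ : Measure (Rn n)) [IsFiniteMeasure σ] (P : Cube n)
    (g : Rn n → ℂ) (hg2 : MemLp g 2 σ) (hsupp : Function.support g ⊆ P.set) :
    ∫ y, ‖g y‖ ∂σ ≤ Real.sqrt (σ P.set).toReal * Real.sqrt (∫ y, ‖g y‖ ^ 2 ∂σ) := by
  have hms := cube_measurableSet P
  set f : Rn n → ℝ := P.set.indicator fun _ => (1:ℝ) with hf
  have hpq : Real.HolderConjugate 2 2 := Real.HolderConjugate.two_two
  have hfmem : MemLp f (ENNReal.ofReal 2) σ := by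
    have h2 : MemLp f 2 σ := (memLp_const (1:ℝ)).indicator hms
    simpa using h2
  have hgmem : MemLp (fun y => ‖g y‖) (ENNReal.ofReal 2) σ := by simpa using hg2.norm
  have h := integral_mul_le_Lp_mul_Lq_of_nonneg (μ := σ) hpq
    (f := f) (g := fun y => ‖g y‖)
    (ae_of_all _ fun y => Set.indicator_nonneg (fun _ _ => zero_le_one) y)
    (ae_of_all _ fun y => norm_nonneg _) hfmem hgmem
  have e1 : ∫ y, f y * ‖g y‖ ∂σ = ∫ y, ‖g y‖ ∂σ := by
    apply integral_congr_ae; apply ae_of_all; intro y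
    by_cases hy : y ∈ P.set
    · simp [hf, Set.indicator_of_mem hy]
    · have hz : g y = 0 := Function.notMem_support.1 fun hmem => hy (hsupp hmem)
      simp [hz]
  have e2 : ∫ y, f y ^ (2:ℝ) ∂σ = (σ P.set).toReal := by
    have hptw : ∀ y, f y ^ (2:ℝ) = f y := by
      intro y; by_cases hy : y ∈ P.set
      · simp [hf, Set.indicator_of_mem hy]
      · simp [hf, Set.indicator_of_notMem hy,
          Real.zero_rpow (by norm_num : (2:ℝ) ≠ 0)]
    simp only [hptw]
    rw [hf, integral_indicator_const (1:ℝ) hms]; simp [Measure.real]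
  have e3 : ∫ y, ‖g y‖ ^ (2:ℝ) ∂σ = ∫ y, ‖g y‖ ^ 2 ∂σ := by
    congr 1
    funext y
    exact Real.rpow_two _
  beta_reduce at h
  rw [e1, e2, e3] at h
  calc ∫ y, ‖g y‖ ∂σ ≤ (σ P.set).toReal ^ (1/2 : ℝ) * (∫ y, ‖g y‖ ^ 2 ∂σ) ^ (1/2 : ℝ) := h
    _ = _ := by rw [Real.sqrt_eq_rpow, Real.sqrt_eq_rpow]

end Aux

/-- If the kernels satisfy the size and `y`-Hölder conditions,
`P, R` are cubes with `ℓ(P) ≤ ℓ(R)/2`, and `g ∈ L²(σ)` is supported in `P` with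
`∫ g dσ = 0`, then for `x ∈ R` and `t ∈ [ℓ(R)/2, ℓ(R))`,
`|θ_t^σ g(x)| ≤ C ℓ(P)^{α/2} ℓ(R)^{α/2} D(P,R)^{-(m+α)} σ(P)^{1/2} ‖g‖_{L²(σ)}`,
where `C` depends only on `n, m, α` and the kernel constants. -/
theorem statement13 (n : ℕ) (m α Cs : ℝ) (hm : 0 < m) (hα : 0 < α) (hCs : 0 < Cs) :
    ∃ C : ℝ, 0 < C ∧
      ∀ sk : ℝ → Rn n → Rn n → ℂ,
        Measurable (fun p : ℝ × Rn n × Rn n => sk p.1 p.2.1 p.2.2) →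
        SizeCond n m α Cs sk → HolderY n m α Cs sk →
      ∀ (σ : Measure (Rn n)) [IsFiniteMeasure σ] (P R : Cube n), P.l ≤ R.l / 2 →
      ∀ g : Rn n → ℂ, Measurable g → MemLp g 2 σ → Function.support g ⊆ P.set →
        (∫ y, g y ∂σ) = 0 →
      ∀ x ∈ R.set, ∀ t : ℝ, R.l / 2 ≤ t → t < R.l →
        ‖theta sk σ g t x‖
          ≤ C * (P.l ^ (α / 2) * R.l ^ (α / 2) / Cube.longDist P R ^ (m + α))
              * Real.sqrt (σ P.set).toReal * Real.sqrt (∫ y, ‖g y‖ ^ 2 ∂σ) := by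
  have hsqn : 0 ≤ Real.sqrt n := Real.sqrt_nonneg n
  have hsq : 0 < Real.sqrt (n:ℝ) + 1 := by positivity
  refine ⟨2 * Cs * (Real.sqrt (n:ℝ) + 1) ^ (α/2) * 3 ^ (m + α), by positivity, ?_⟩
  intro sk hskm hsize hhol σ _ P R hPR g hgm hg2 hsupp hg0 x hx t ht1 ht2
  set C := 2 * Cs * (Real.sqrt (n:ℝ) + 1) ^ (α/2) * 3 ^ (m + α) with hCdef
  have hPl := P.l_pos
  have hRl := R.l_pos
  have ht0 : 0 < t := by linarith
  set D := Cube.longDist P R with hDdef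
  have hd0 : 0 ≤ Cube.dist P R := cube_dist_nonneg P R
  have hD : 0 < D := by rw [hDdef]; unfold Cube.longDist; linarith
  have hE : 0 ≤ m + α := by linarith
  set B := C * (P.l ^ (α/2) * R.l ^ (α/2) / D ^ (m+α)) with hBdef
  have hB0 : 0 ≤ B := by rw [hBdef, hCdef]; positivity
  have hgeo : ∀ z : Rn n, z ∈ P.set → D / 3 ≤ t + Dist.dist x z := by
    intro z hz
    have h1 : Cube.dist P R ≤ Dist.dist x z := cube_dist_le hz hx
    have h2 : (0:ℝ) ≤ Dist.dist x z := dist_nonneg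
    rw [hDdef]; unfold Cube.longDist; linarith
  have hker : ∀ y ∈ P.set, ‖sk t x y - sk t x P.c‖ ≤ B := by
    intro y hy
    have hyc : Dist.dist y P.c ≤ (Real.sqrt (n:ℝ) + 1) * P.l / 2 := by
      have h := dist_center_le hy
      nlinarith
    have hsql : 0 < (Real.sqrt (n:ℝ) + 1) * P.l := by positivity
    have hkey : ∀ z : Rn n, z ∈ P.set → ∀ N : ℝ, 0 ≤ N →
        N ≤ ((Real.sqrt (n:ℝ) + 1) * P.l) ^ (α/2) * R.l ^ (α/2) →
        Cs * N / (t + Dist.dist x z) ^ (m+α) ≤ B / 2 := by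
      intro z hz N hN hNle
      have h1 := frac_bound (Cs := Cs) (N := N) (N' := ((Real.sqrt (n:ℝ) + 1)*P.l)^(α/2) * R.l^(α/2))
        (s := t + Dist.dist x z) (Dv := D) (E := m+α) hCs.le hNle hN hD hE (hgeo z hz)
      calc Cs * N / (t + Dist.dist x z) ^ (m+α)
          ≤ Cs * (((Real.sqrt (n:ℝ) + 1)*P.l)^(α/2) * R.l^(α/2)) * 3^(m+α) / D^(m+α) := h1
        _ = B / 2 := by
            rw [hBdef, hCdef, Real.mul_rpow hsq.le hPl.le]
            ring
    by_cases hc : Dist.dist y P.c < t / 2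
    · have h1 := hhol t ht0 x y P.c hc
      have h2 : Dist.dist y P.c ^ α ≤ ((Real.sqrt (n:ℝ) + 1) * P.l) ^ (α/2) * R.l ^ (α/2) :=
        rpow_le_geom dist_nonneg hα (by linarith) (by linarith)
      have h3 := hkey y hy (Dist.dist y P.c ^ α) (Real.rpow_nonneg dist_nonneg α) h2
      linarith
    · push_neg at hc
      have hty : t ≤ (Real.sqrt (n:ℝ) + 1) * P.l := by linarith
      have h2 : t ^ α ≤ ((Real.sqrt (n:ℝ) + 1) * P.l) ^ (α/2) * R.l ^ (α/2) :=
        rpow_le_geom ht0.le hα hty ht2.le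
      have h3 := hkey y hy (t ^ α) (Real.rpow_nonneg ht0.le α) h2
      have h4 := hkey P.c (center_mem P) (t ^ α) (Real.rpow_nonneg ht0.le α) h2
      calc ‖sk t x y - sk t x P.c‖ ≤ ‖sk t x y‖ + ‖sk t x P.c‖ := norm_sub_le _ _
        _ ≤ B/2 + B/2 := add_le_add ((hsize t ht0 x y).trans h3)
            ((hsize t ht0 x P.c).trans h4)
        _ = B := by ring
  have hgi : Integrable g σ := hg2.integrable (by norm_num)
  have hskm1 : Measurable fun y => sk t x y := by
    have h : (fun y : Rn n => sk t x y) = (fun p : ℝ × Rn n × Rn n => sk p.1 p.2.1 p.2.2) ∘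
        (fun y => (t, x, y)) := rfl
    rw [h]
    exact hskm.comp (measurable_const.prodMk (measurable_const.prodMk measurable_id))
  have hbnd : ∀ y, ‖sk t x y * g y‖ ≤ (Cs * t ^ α / t ^ (m+α)) * ‖g y‖ := by
    intro y
    rw [norm_mul]
    apply mul_le_mul_of_nonneg_right _ (norm_nonneg _)
    calc ‖sk t x y‖ ≤ Cs * t^α / (t + Dist.dist x y) ^ (m+α) := hsize t ht0 x y
      _ ≤ Cs * t^α / t^(m+α) :=
          div_le_div_of_nonneg_left (by positivity) (Real.rpow_pos_of_pos ht0 _)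
            (Real.rpow_le_rpow ht0.le (le_add_of_nonneg_right dist_nonneg) hE)
  have hski : Integrable (fun y => sk t x y * g y) σ := by
    refine Integrable.mono' ((hgi.norm).const_mul (Cs * t ^ α / t ^ (m+α)))
      ((hskm1.mul hgm).aestronglyMeasurable) (ae_of_all _ hbnd)
  have hconst : Integrable (fun y => sk t x P.c * g y) σ := hgi.const_mul _
  have hrepr : theta sk σ g t x = ∫ y, (sk t x y - sk t x P.c) * g y ∂σ := by
    rw [theta]
    have h : ∫ y, (sk t x y - sk t x P.c) * g y ∂σ
        = (∫ y, sk t x y * g y ∂σ) - ∫ y, sk t x P.c * g y ∂σ := by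
      rw [← integral_sub hski hconst]
      congr 1; funext y; ring
    rw [h, integral_const_mul, hg0, mul_zero, sub_zero]
  have hpt : ∀ y, ‖(sk t x y - sk t x P.c) * g y‖ ≤ B * ‖g y‖ := by
    intro y
    by_cases hy : g y = 0
    · simp [hy]
    · have hyP : y ∈ P.set := hsupp hy
      rw [norm_mul]
      exact mul_le_mul_of_nonneg_right (hker y hyP) (norm_nonneg _)
  calc ‖theta sk σ g t x‖ = ‖∫ y, (sk t x y - sk t x P.c) * g y ∂σ‖ := by rw [hrepr]
    _ ≤ ∫ y, ‖(sk t x y - sk t x P.c) * g y‖ ∂σ := norm_integral_le_integral_norm _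
    _ ≤ ∫ y, B * ‖g y‖ ∂σ := by
        have hsub : Integrable (fun y => (sk t x y - sk t x P.c) * g y) σ := by
          have h' := hski.sub hconst
          simpa [sub_mul, Pi.sub_def] using h'
        exact integral_mono hsub.norm ((hgi.norm).const_mul B) hpt
    _ = B * ∫ y, ‖g y‖ ∂σ := integral_const_mul B _
    _ ≤ B * (Real.sqrt (σ P.set).toReal * Real.sqrt (∫ y, ‖g y‖ ^ 2 ∂σ)) :=
        mul_le_mul_of_nonneg_left (cs_bound σ P g hg2 hsupp) hB0
    _ = C * (P.l ^ (α/2) * R.l ^ (α/2) / D ^ (m+α))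
          * Real.sqrt (σ P.set).toReal * Real.sqrt (∫ y, ‖g y‖ ^ 2 ∂σ) := by
        rw [hBdef]; ring


end
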